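/- For any sequence of payoff vectors u^1, …, u^n with entries in [0,h] and any learning rate ε ∈ (0,1], the Exponential Weights algorithm satisfies E[EW] ≥ (1 − ε)·OPT − (h/ε)·ln k, where E[EW] = Σ_{i=1}^n α^i · u^i is its expected total payoff and OPT = max_a Σ_{i=1}^n u^i_a. -/

import Mathlib

private lemma ew_rpow_le {ε x : ℝ} (hε : 0 ≤ ε) (hx0 : 0 ≤ x) (hx1 : x ≤ 1) :
    (1 + ε) ^ x ≤ 1 + ε * x := by
  have h := Real.geom_mean_le_arith_mean2_weighted hx0 (by linarith : (0:ℝ) ≤ 1 - x)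
    (by linarith : (0:ℝ) ≤ 1 + ε) (by norm_num : (0:ℝ) ≤ 1) (by ring)
  rw [Real.one_rpow, mul_one] at h
  nlinarith [h]

private lemma ew_log_ge {ε : ℝ} (hε : 0 < ε) (hε1 : ε ≤ 1) :
    ε - ε ^ 2 ≤ Real.log (1 + ε) := by
  rw [Real.le_log_iff_exp_le (by linarith)]
  have h1 : (-(ε - ε ^ 2)) + 1 ≤ Real.exp (-(ε - ε ^ 2)) := Real.add_one_le_exp _
  have h3 : Real.exp (ε - ε ^ 2) * Real.exp (-(ε - ε ^ 2)) = 1 := by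
    rw [← Real.exp_add]; simp
  have h4 : 0 < Real.exp (ε - ε ^ 2) := Real.exp_pos _
  nlinarith [mul_le_mul_of_nonneg_left h1 h4.le, h4, sq_nonneg ε, sq_nonneg (1 - ε)]

/-- The Exponential Weights algorithm with learning rate `ε ∈ (0,1]`,
which in round `i` plays action `a` with probability
`(1+ε)^(U^{i-1}_a/h) / Σ_j (1+ε)^(U^{i-1}_j/h)` where `U^{i-1}_a = Σ_{i'<i} u^{i'}_a`,
satisfies `E[EW] ≥ (1-ε)·OPT - (h/ε)·ln k` on every payoff sequence in `[0,h]^k`. -/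
theorem exponential_weights_bound
    (k n : ℕ) (hk : 0 < k) (h ε : ℝ) (hh : 0 < h) (hε : 0 < ε) (hε1 : ε ≤ 1)
    (u : Fin n → Fin k → ℝ) (hu : ∀ i a, u i a ∈ Set.Icc (0 : ℝ) h) :
    ∑ i : Fin n, ∑ a : Fin k,
        ((1 + ε) ^ ((∑ i' ∈ Finset.univ.filter (fun i' : Fin n => i'.val < i.val), u i' a) / h)
            / ∑ j : Fin k,
                (1 + ε) ^ ((∑ i' ∈ Finset.univ.filter (fun i' : Fin n => i'.val < i.val), u i' j) / h))
          * u i a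
      ≥ (1 - ε) * (Finset.univ.sup' (Finset.univ_nonempty_iff.mpr ⟨⟨0, hk⟩⟩)
            fun a : Fin k => ∑ i : Fin n, u i a)
        - (h / ε) * Real.log k := by
  have hε' : (0:ℝ) < 1 + ε := by linarith
  have hkpos : (0:ℝ) < (k:ℝ) := by exact_mod_cast hk
  set S : ℕ → Fin k → ℝ := fun m a =>
    ∑ i' ∈ Finset.univ.filter (fun i' : Fin n => i'.val < m), u i' a with hS
  set W : ℕ → ℝ := fun m => ∑ j : Fin k, (1 + ε) ^ (S m j / h) with hW
  set p : Fin n → ℝ := fun i =>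
    ∑ a : Fin k, ((1 + ε) ^ (S i.val a / h) / W i.val) * u i a with hp
  have hterm : ∀ (m : ℕ) (a : Fin k), 0 < (1 + ε) ^ (S m a / h) :=
    fun m a => Real.rpow_pos_of_pos hε' _
  have hWpos : ∀ m, 0 < W m := by
    intro m
    have : Nonempty (Fin k) := ⟨⟨0, hk⟩⟩
    exact Finset.sum_pos (fun j _ => hterm m j) Finset.univ_nonempty
  -- step relation for S
  have hSstep : ∀ (m : ℕ) (hm : m < n) (a : Fin k),
      S (m + 1) a = S m a + u ⟨m, hm⟩ a := by
    intro m hm a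
    have hset : (Finset.univ.filter (fun i' : Fin n => i'.val < m + 1))
        = insert ⟨m, hm⟩ (Finset.univ.filter (fun i' : Fin n => i'.val < m)) := by
      ext x
      simp only [Finset.mem_filter, Finset.mem_insert, Finset.mem_univ, true_and, Fin.ext_iff]
      omega
    simp only [hS]
    rw [hset, Finset.sum_insert (by simp)]
    ring
  -- one-round step bound
  have step : ∀ (m : ℕ) (hm : m < n),
      W (m + 1) ≤ W m * Real.exp ((ε / h) * p ⟨m, hm⟩) := by
    intro m hm
    have e1 : W (m + 1) = ∑ a : Fin k, (1 + ε) ^ (S m a / h) * (1 + ε) ^ (u ⟨m, hm⟩ a / h) := by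
      simp only [hW]
      exact Finset.sum_congr rfl fun a _ => by rw [hSstep m hm a, add_div, Real.rpow_add hε']
    have e3 : W (m + 1) ≤ ∑ a : Fin k, (1 + ε) ^ (S m a / h) * (1 + ε * (u ⟨m, hm⟩ a / h)) := by
      rw [e1]
      refine Finset.sum_le_sum fun a _ => mul_le_mul_of_nonneg_left ?_ (hterm m a).le
      exact ew_rpow_le hε.le (div_nonneg (hu _ a).1 hh.le) ((div_le_one hh).mpr (hu _ a).2)
    have hWm : W m ≠ 0 := (hWpos m).ne'
    have hWp : W m * p ⟨m, hm⟩ = ∑ a : Fin k, (1 + ε) ^ (S m a / h) * u ⟨m, hm⟩ a := by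
      simp only [hp]
      rw [Finset.mul_sum]
      refine Finset.sum_congr rfl fun a _ => ?_
      field_simp
    have e4 : ∑ a : Fin k, (1 + ε) ^ (S m a / h) * (1 + ε * (u ⟨m, hm⟩ a / h))
        = W m * (1 + (ε / h) * p ⟨m, hm⟩) := by
      have expand : ∀ a : Fin k, (1 + ε) ^ (S m a / h) * (1 + ε * (u ⟨m, hm⟩ a / h))
          = (1 + ε) ^ (S m a / h) + (ε / h) * ((1 + ε) ^ (S m a / h) * u ⟨m, hm⟩ a) := by
        intro a; field_simp
      rw [Finset.sum_congr rfl fun a _ => expand a, Finset.sum_add_distrib,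
        ← Finset.mul_sum, ← hWp]
      simp only [hW]
      ring
    have e5 : 1 + (ε / h) * p ⟨m, hm⟩ ≤ Real.exp ((ε / h) * p ⟨m, hm⟩) := by
      have := Real.add_one_le_exp ((ε / h) * p ⟨m, hm⟩); linarith
    calc W (m + 1) ≤ W m * (1 + (ε / h) * p ⟨m, hm⟩) := e3.trans_eq e4
      _ ≤ W m * Real.exp ((ε / h) * p ⟨m, hm⟩) :=
          mul_le_mul_of_nonneg_left e5 (hWpos m).le
  -- main potential bound by induction
  have main : ∀ m, m ≤ n → W m ≤ (k : ℝ) *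
      Real.exp ((ε / h) * ∑ i ∈ Finset.univ.filter (fun i : Fin n => i.val < m), p i) := by
    intro m
    induction m with
    | zero =>
      intro _
      have hfilter : Finset.univ.filter (fun i : Fin n => i.val < 0) = ∅ := by simp
      have hW0eq : W 0 = (k : ℝ) := by
        simp only [hW, hS]
        rw [Finset.sum_congr rfl fun j _ => by
          rw [show (Finset.univ.filter fun i' : Fin n => i'.val < 0) = ∅ by simp,
            Finset.sum_empty, zero_div, Real.rpow_zero]]
        simp
      rw [hfilter, Finset.sum_empty, mul_zero, Real.exp_zero, mul_one, hW0eq]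
    | succ m ih =>
      intro hm1
      have hm : m < n := hm1
      have ihm := ih (Nat.le_of_succ_le hm1)
      have hfilter : Finset.univ.filter (fun i : Fin n => i.val < m + 1)
          = insert ⟨m, hm⟩ (Finset.univ.filter (fun i : Fin n => i.val < m)) := by
        ext x
        simp only [Finset.mem_filter, Finset.mem_insert, Finset.mem_univ, true_and, Fin.ext_iff]
        omega
      rw [hfilter, Finset.sum_insert (by simp), mul_add, Real.exp_add]
      calc W (m + 1) ≤ W m * Real.exp ((ε / h) * p ⟨m, hm⟩) := step m hm
        _ ≤ ((k : ℝ) * Real.exp ((ε / h) *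
              ∑ i ∈ Finset.univ.filter (fun i : Fin n => i.val < m), p i))
            * Real.exp ((ε / h) * p ⟨m, hm⟩) :=
            mul_le_mul_of_nonneg_right ihm (Real.exp_pos _).le
        _ = (k : ℝ) * (Real.exp ((ε / h) * p ⟨m, hm⟩) *
              Real.exp ((ε / h) * ∑ i ∈ Finset.univ.filter (fun i : Fin n => i.val < m), p i)) := by
            ring
  -- final chain
  have hfn : Finset.univ.filter (fun i : Fin n => i.val < n) = Finset.univ := by
    ext x; simp [x.isLt]
  obtain ⟨a0, -, ha0⟩ := Finset.exists_mem_eq_sup'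
    (Finset.univ_nonempty_iff.mpr ⟨(⟨0, hk⟩ : Fin k)⟩) (fun a : Fin k => ∑ i : Fin n, u i a)
  have hSn : S n a0 = ∑ i : Fin n, u i a0 := by simp only [hS]; rw [hfn]
  have hOPT0 : 0 ≤ S n a0 := by
    rw [hSn]; exact Finset.sum_nonneg fun i _ => (hu i a0).1
  have hle1 : (1 + ε) ^ (S n a0 / h) ≤ W n := by
    simp only [hW]
    exact Finset.single_le_sum (f := fun j : Fin k => (1 + ε) ^ (S n j / h))
      (fun j _ => (hterm n j).le) (Finset.mem_univ a0)
  set EW : ℝ := ∑ i : Fin n, p i with hEW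
  have hfsum : ∑ i ∈ Finset.univ.filter (fun i : Fin n => i.val < n), p i = EW := by
    rw [hfn]
  have hchain : (1 + ε) ^ (S n a0 / h) ≤ (k : ℝ) * Real.exp ((ε / h) * EW) := by
    have := main n le_rfl
    rw [hfsum] at this
    exact hle1.trans this
  have hlog := Real.log_le_log (Real.rpow_pos_of_pos hε' _) hchain
  rw [Real.log_rpow hε', Real.log_mul hkpos.ne' (Real.exp_pos _).ne', Real.log_exp] at hlog
  -- hlog : S n a0 / h * log (1+ε) ≤ log k + ε / h * EW
  have hL := ew_log_ge hε hε1
  -- goal restated via p and EW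
  rw [ge_iff_le, ha0, ← hSn]
  -- now: (1-ε) * S n a0 - (h/ε) * log k ≤ EW
  have hmul : S n a0 * Real.log (1 + ε) ≤ h * Real.log k + ε * EW := by
    have := mul_le_mul_of_nonneg_left hlog hh.le
    field_simp at this ⊢
    nlinarith [this]
  have h1 : S n a0 * (ε - ε ^ 2) ≤ S n a0 * Real.log (1 + ε) :=
    mul_le_mul_of_nonneg_left hL hOPT0
  have h2 : ε * (h / ε * Real.log k) = h * Real.log k := by field_simp
  have key : ε * ((1 - ε) * S n a0 - h / ε * Real.log k) ≤ ε * EW := by nlinarith [h1, hmul, h2]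
  exact le_of_mul_le_mul_left key hε
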